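/- Let A : E → E' be a linear map between finite-dimensional real inner product spaces, and let V, W be orthogonal subspaces of E. Then the volume-scaling determinant of A on V ⊕ W is at most the product of the volume-scaling determinants of A on V and on W: |det(A|_{V ⊕ W})| ≤ |det(A|_V)| · |det(A|_W)|. -/

import Mathlib

open Matrix Finset

section MatrixLemmas
variable {n m : Type*} [Fintype n] [DecidableEq n] [Fintype m] [DecidableEq m]

lemma psd_det_nonneg {Y : Matrix n n ℝ} (hY : Y.PosSemidef) : 0 ≤ Y.det := by
  rw [hY.isHermitian.det_eq_prod_eigenvalues]
  exact Finset.prod_nonneg fun i _ => by simpa using hY.eigenvalues_nonneg i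

lemma one_le_det_one_add {Y : Matrix n n ℝ} (hY : Y.PosSemidef) : 1 ≤ (1 + Y).det := by
  have h := hY.isHermitian
  set U : Matrix n n ℝ := (IsHermitian.eigenvectorUnitary h : Matrix n n ℝ) with hU
  have hUU : U * star U = 1 := (Matrix.mem_unitaryGroup_iff).mp (IsHermitian.eigenvectorUnitary h).2
  have key : 1 + Y = U * (1 + diagonal h.eigenvalues) * star U := by
    calc 1 + Y = U * 1 * star U + U * diagonal (RCLike.ofReal ∘ h.eigenvalues) * star U := by
          rw [mul_one, hUU]; conv_lhs => rw [h.spectral_theorem]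
          rfl
    _ = U * (1 + diagonal h.eigenvalues) * star U := by
          simp [mul_add, add_mul, Function.comp]
  rw [key]
  have : (U * (1 + diagonal h.eigenvalues) * star U).det = (1 + diagonal h.eigenvalues).det := by
    rw [det_mul, det_mul, mul_comm, ← mul_assoc, ← det_mul]
    have hUU' : star U * U = 1 := (Matrix.mem_unitaryGroup_iff').mp (IsHermitian.eigenvectorUnitary h).2
    rw [hUU']
    simp
  rw [this]
  have : (1 : Matrix n n ℝ) + diagonal h.eigenvalues = diagonal (fun i => 1 + h.eigenvalues i) := by
    rw [← diagonal_one, diagonal_add]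
  rw [this, det_diagonal]
  have : ∏ _i : n, (1:ℝ) ≤ ∏ i : n, (1 + h.eigenvalues i) :=
    Finset.prod_le_prod (fun i _ => zero_le_one) (fun i _ => by nlinarith [hY.eigenvalues_nonneg i])
  simpa using this

lemma psd_posDef_of_det_ne_zero {P : Matrix n n ℝ} (hP : P.PosSemidef) (hd : P.det ≠ 0) :
    P.PosDef := by
  refine PosDef.of_dotProduct_mulVec_pos hP.isHermitian fun x hx => ?_
  have h0 : star x ⬝ᵥ P *ᵥ x ≠ 0 := by
    intro h
    rw [hP.dotProduct_mulVec_zero_iff] at h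
    exact hd (Matrix.exists_mulVec_eq_zero_iff.mp ⟨x, hx, h⟩)
  have h1 := hP.dotProduct_mulVec_nonneg x
  exact lt_of_le_of_ne h1 (Ne.symm h0)

open scoped MatrixOrder in
lemma det_le_det_add {S X : Matrix n n ℝ} (hS : S.PosSemidef) (hX : X.PosSemidef) :
    S.det ≤ (S + X).det := by
  by_cases hd : S.det = 0
  · rw [hd]; exact psd_det_nonneg (hS.add hX)
  · have hSpd : S.PosDef := psd_posDef_of_det_ne_zero hS hd
    set R := CFC.sqrt S with hR
    have hRR : R * R = S := CFC.sqrt_mul_sqrt_self S hS.nonneg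
    have hRdet : R.det ≠ 0 := by
      intro h
      apply hd
      rw [← hRR, det_mul, h, zero_mul]
    have hRpd : R.PosDef := psd_posDef_of_det_ne_zero (CFC.sqrt_nonneg S).posSemidef hRdet
    have hRinv : R * R⁻¹ = 1 := mul_nonsing_inv R (isUnit_iff_ne_zero.mpr hRdet)
    have hRinv' : R⁻¹ * R = 1 := nonsing_inv_mul R (isUnit_iff_ne_zero.mpr hRdet)
    have hRsymm : R⁻¹ᴴ = R⁻¹ := by
      rw [conjTranspose_nonsing_inv, (CFC.sqrt_nonneg S).posSemidef.isHermitian]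
    have hY : (R⁻¹ * X * R⁻¹).PosSemidef := by
      have := hX.conjTranspose_mul_mul_same R⁻¹
      rwa [hRsymm] at this
    have key : S + X = R * (1 + R⁻¹ * X * R⁻¹) * R := by
      rw [mul_add, add_mul, mul_one, hRR]
      congr 1
      rw [← mul_assoc, ← mul_assoc, hRinv, one_mul, mul_assoc, hRinv', mul_one]
    rw [key, det_mul, det_mul]
    have h1 : 1 ≤ (1 + R⁻¹ * X * R⁻¹).det := one_le_det_one_add hY
    have hSd : S.det = R.det * R.det := by rw [← hRR, det_mul]
    calc S.det = R.det * 1 * R.det := by rw [mul_one, hSd]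
    _ ≤ R.det * (1 + R⁻¹ * X * R⁻¹).det * R.det := by
        have h0 : 0 < R.det := hRpd.det_pos
        nlinarith

lemma fischer {P : Matrix m m ℝ} {B : Matrix m n ℝ} {Q : Matrix n n ℝ}
    (hM : (fromBlocks P B Bᴴ Q).PosSemidef) :
    (fromBlocks P B Bᴴ Q).det ≤ P.det * Q.det := by
  have hP : P.PosSemidef := by
    have h := hM.submatrix (Sum.inl : m → m ⊕ n)
    have : (fromBlocks P B Bᴴ Q).submatrix (Sum.inl : m → m ⊕ n) Sum.inl = P := by
      ext i j; simp [fromBlocks]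
    rwa [this] at h
  have hQ : Q.PosSemidef := by
    have h := hM.submatrix (Sum.inr : n → m ⊕ n)
    have : (fromBlocks P B Bᴴ Q).submatrix (Sum.inr : n → m ⊕ n) Sum.inr = Q := by
      ext i j; simp [fromBlocks]
    rwa [this] at h
  by_cases hd : P.det = 0
  · obtain ⟨x, hx, hPx⟩ := Matrix.exists_mulVec_eq_zero_iff.mpr hd
    set z : m ⊕ n → ℝ := Sum.elim x 0 with hz
    have hz0 : z ≠ 0 := by
      intro h
      apply hx
      funext i
      have := congrFun h (Sum.inl i)
      simpa [hz] using this
    have hdot : star z ⬝ᵥ (fromBlocks P B Bᴴ Q) *ᵥ z = 0 := by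
      have hstar : star z = z := by funext i; simp
      rw [hstar, hz, fromBlocks_mulVec, sumElim_dotProduct_sumElim]
      simp [hPx]
    have hMz := (hM.dotProduct_mulVec_zero_iff z).mp hdot
    have : (fromBlocks P B Bᴴ Q).det = 0 :=
      Matrix.exists_mulVec_eq_zero_iff.mp ⟨z, hz0, hMz⟩
    rw [this, hd, zero_mul]
  · have hPd : P.PosDef := psd_posDef_of_det_ne_zero hP hd
    have : Invertible P := P.invertibleOfIsUnitDet (isUnit_iff_ne_zero.mpr hd)
    rw [det_fromBlocks₁₁, invOf_eq_nonsing_inv]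
    have hX : (Bᴴ * P⁻¹ * B).PosSemidef := hP.inv.conjTranspose_mul_mul_same B
    have hSchur : (Q - Bᴴ * P⁻¹ * B).PosSemidef := (PosDef.fromBlocks₁₁ B Q hPd).mp hM
    have hle : (Q - Bᴴ * P⁻¹ * B).det ≤ Q.det := by
      have := det_le_det_add hSchur hX
      rwa [sub_add_cancel] at this
    exact mul_le_mul_of_nonneg_left hle (le_of_lt hPd.det_pos)

end MatrixLemmas

noncomputable def gram {F : Type*} [NormedAddCommGroup F] [InnerProductSpace ℝ F]
    {ι : Type*} [Fintype ι] (g : ι → F) : Matrix ι ι ℝ :=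
  Matrix.of fun i j => (inner ℝ (g i) (g j) : ℝ)

lemma gram_posSemidef {F : Type*} [NormedAddCommGroup F] [InnerProductSpace ℝ F]
    {ι : Type*} [Fintype ι] (g : ι → F) : (gram g).PosSemidef := by
  refine PosSemidef.of_dotProduct_mulVec_nonneg ?_ ?_
  · ext i j
    simp [_root_.gram, Matrix.conjTranspose_apply, real_inner_comm]
  · intro x
    have : star x ⬝ᵥ (gram g) *ᵥ x = (inner ℝ (∑ i, x i • g i) (∑ j, x j • g j) : ℝ) := by
      simp only [_root_.gram, dotProduct, Matrix.mulVec, inner_sum, sum_inner, real_inner_smul_left,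
        real_inner_smul_right, Matrix.of_apply, Pi.star_apply, star_trivial, Finset.mul_sum]
      rw [Finset.sum_comm]
      refine Finset.sum_congr rfl fun i _ => Finset.sum_congr rfl fun j _ => by ring
    rw [this]
    exact real_inner_self_nonneg

/-- The volume-scaling factor (absolute Jacobian determinant) of a linear map `A`
restricted to a subspace `V`, defined via the Gram determinant `√(det (A|_V)^* (A|_V))`.
For `V = ⊥` it equals `1`. -/
noncomputable def sdet {E F : Type*} [NormedAddCommGroup E] [InnerProductSpace ℝ E]
    [FiniteDimensional ℝ E] [NormedAddCommGroup F] [InnerProductSpace ℝ F]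
    [FiniteDimensional ℝ F] (A : E →ₗ[ℝ] F) (V : Submodule ℝ E) : ℝ :=
  Real.sqrt (LinearMap.det ((LinearMap.adjoint (A ∘ₗ V.subtype)) ∘ₗ (A ∘ₗ V.subtype)))

lemma sdet_eq {E F : Type*} [NormedAddCommGroup E] [InnerProductSpace ℝ E]
    [FiniteDimensional ℝ E] [NormedAddCommGroup F] [InnerProductSpace ℝ F]
    [FiniteDimensional ℝ F] (A : E →ₗ[ℝ] F) (U : Submodule ℝ E)
    {ι : Type*} [Fintype ι] [DecidableEq ι] (b : OrthonormalBasis ι ℝ U) :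
    sdet A U = Real.sqrt (gram (fun i => A (b i : E))).det := by
  rw [sdet]
  congr 1
  rw [← LinearMap.det_toMatrix b.toBasis]
  congr 1
  ext i j
  rw [LinearMap.toMatrix_apply, b.coe_toBasis, b.coe_toBasis_repr_apply, b.repr_apply_apply,
    LinearMap.comp_apply, LinearMap.adjoint_inner_right]
  simp [_root_.gram]

/-- For a linear map `A : E → E'` between finite-dimensional real inner product
spaces and orthogonal subspaces `V ⟂ W` of `E`, the volume-scaling determinant on `V ⊕ W`
is at most the product of those on `V` and on `W`. -/
theorem stmt1 {E E' : Type*} [NormedAddCommGroup E] [InnerProductSpace ℝ E]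
    [FiniteDimensional ℝ E] [NormedAddCommGroup E'] [InnerProductSpace ℝ E']
    [FiniteDimensional ℝ E'] (A : E →ₗ[ℝ] E') (V W : Submodule ℝ E)
    (horth : ∀ v ∈ V, ∀ w ∈ W, (inner ℝ v w : ℝ) = 0) :
    sdet A (V ⊔ W) ≤ sdet A V * sdet A W := by
  classical
  set bV := stdOrthonormalBasis ℝ V with hbV
  set bW := stdOrthonormalBasis ℝ W with hbW
  set f : Fin (Module.finrank ℝ V) ⊕ Fin (Module.finrank ℝ W) → (V ⊔ W : Submodule ℝ E) :=
    Sum.elim (fun i => ⟨(bV i : E), Submodule.mem_sup_left (bV i).2⟩)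
             (fun j => ⟨(bW j : E), Submodule.mem_sup_right (bW j).2⟩) with hf
  have hon : Orthonormal ℝ f := by
    rw [orthonormal_iff_ite]
    have hV := orthonormal_iff_ite.mp bV.orthonormal
    have hW := orthonormal_iff_ite.mp bW.orthonormal
    rintro (i | i) (j | j)
    · have : (inner ℝ (f (Sum.inl i)) (f (Sum.inl j)) : ℝ) = inner ℝ (bV i) (bV j) := rfl
      rw [this, hV i j]
      simp
    · have : (inner ℝ (f (Sum.inl i)) (f (Sum.inr j)) : ℝ) = inner ℝ (bV i : E) (bW j : E) := rfl
      rw [this, horth _ (bV i).2 _ (bW j).2]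
      simp
    · have : (inner ℝ (f (Sum.inr i)) (f (Sum.inl j)) : ℝ) = inner ℝ (bW i : E) (bV j : E) := rfl
      rw [this, real_inner_comm, horth _ (bV j).2 _ (bW i).2]
      simp
    · have : (inner ℝ (f (Sum.inr i)) (f (Sum.inr j)) : ℝ) = inner ℝ (bW i) (bW j) := rfl
      rw [this, hW i j]
      simp
  have hmap : Submodule.map (V ⊔ W).subtype (Submodule.span ℝ (Set.range f)) = V ⊔ W := by
    rw [Submodule.map_span]
    have h1 : (V ⊔ W).subtype '' Set.range f
        = Set.range (fun i => (bV i : E)) ∪ Set.range (fun j => (bW j : E)) := by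
      rw [← Set.range_comp]
      have : (V ⊔ W).subtype ∘ f
          = Sum.elim (fun i => (bV i : E)) (fun j => (bW j : E)) := by
        funext k; cases k <;> rfl
      rw [this, Set.Sum.elim_range]
    rw [h1, Submodule.span_union]
    have h2 : Submodule.span ℝ (Set.range (fun i => (bV i : E))) = V := by
      have : (fun i => (bV i : E)) = V.subtype ∘ bV := rfl
      rw [this, Set.range_comp, ← Submodule.map_span, ← bV.coe_toBasis, bV.toBasis.span_eq,
        Submodule.map_top, Submodule.range_subtype]
    have h3 : Submodule.span ℝ (Set.range (fun j => (bW j : E))) = W := by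
      have : (fun j => (bW j : E)) = W.subtype ∘ bW := rfl
      rw [this, Set.range_comp, ← Submodule.map_span, ← bW.coe_toBasis, bW.toBasis.span_eq,
        Submodule.map_top, Submodule.range_subtype]
    rw [h2, h3]
  have hspan : ⊤ ≤ Submodule.span ℝ (Set.range f) := by
    refine ge_of_eq ?_
    apply Submodule.map_injective_of_injective (V ⊔ W).injective_subtype
    rw [hmap, Submodule.map_top, Submodule.range_subtype]
  set b : OrthonormalBasis _ ℝ (V ⊔ W : Submodule ℝ E) := OrthonormalBasis.mk hon hspan with hb
  set P := gram (fun i => A (bV i : E)) with hP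
  set Q := gram (fun j => A (bW j : E)) with hQ
  set B : Matrix _ _ ℝ :=
    Matrix.of (fun i j => (inner ℝ (A (bV i : E)) (A (bW j : E)) : ℝ)) with hB
  have hbf : ∀ k, ((b k : (V ⊔ W : Submodule ℝ E)) : E)
      = Sum.elim (fun i => (bV i : E)) (fun j => (bW j : E)) k := by
    intro k
    rw [hb, OrthonormalBasis.coe_mk]
    cases k <;> rfl
  have hMf : gram (fun k => A ((b k : (V ⊔ W : Submodule ℝ E)) : E)) = fromBlocks P B Bᴴ Q := by
    ext k l
    rcases k with i | i <;> rcases l with j | j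
    · simp only [_root_.gram, Matrix.of_apply, hbf, Sum.elim_inl, fromBlocks_apply₁₁, hP]
    · simp only [_root_.gram, Matrix.of_apply, hbf, Sum.elim_inl, Sum.elim_inr, fromBlocks_apply₁₂, hB]
    · simp only [_root_.gram, Matrix.of_apply, hbf, Sum.elim_inl, Sum.elim_inr, fromBlocks_apply₂₁,
        Matrix.conjTranspose_apply, hB, star_trivial]
      exact real_inner_comm _ _
    · simp only [_root_.gram, Matrix.of_apply, hbf, Sum.elim_inr, fromBlocks_apply₂₂, hQ]
  have hPSD : (fromBlocks P B Bᴴ Q).PosSemidef := by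
    rw [← hMf]; exact gram_posSemidef _
  rw [sdet_eq A (V ⊔ W) b, sdet_eq A V bV, sdet_eq A W bW]
  calc Real.sqrt (gram fun k => A ((b k : (V ⊔ W : Submodule ℝ E)) : E)).det
      = Real.sqrt (fromBlocks P B Bᴴ Q).det := by rw [hMf]
    _ ≤ Real.sqrt (P.det * Q.det) := Real.sqrt_le_sqrt (fischer hPSD)
    _ = Real.sqrt P.det * Real.sqrt Q.det :=
        Real.sqrt_mul (psd_det_nonneg (gram_posSemidef _)) _
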